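/- Let n and k be integers with 1 ≤ k ≤ n, let t ≤ k be a positive integer, and let S_1,…,S_t be pairwise disjoint nonempty finite sets with |S_1| + ⋯ + |S_t| ≤ n. Then ∑_{i=1}^t ⌈log₂ |S_i|⌉ ≤ k·(log₂(n/k) + 1). (The counting step in the proof of Lemma 1 bounding the total number of cut nodes.) -/

import Mathlib

open Real Set Finset

lemma aux_glog_deriv (N : ℝ) (x : ℝ) (hx : 0 < x) :
    HasDerivAt (fun y : ℝ => y * (Real.log (2 * N) - Real.log y))
      (Real.log (2 * N) - Real.log x - 1) x := by
  have h := (hasDerivAt_id x).mul ((hasDerivAt_const x (Real.log (2 * N))).sub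
    (Real.hasDerivAt_log hx.ne'))
  refine h.congr_deriv ?_
  simp only [Pi.sub_apply, id]
  field_simp
  ring

lemma aux_glog_mono (N a k : ℝ) (ha : 1 ≤ a) (hak : a ≤ k) (hkN : k ≤ N) (h2a : 2 * a ≤ N) :
    a * (Real.log (2 * N) - Real.log a) ≤ k * (Real.log (2 * N) - Real.log k) := by
  set g : ℝ → ℝ := fun y => y * (Real.log (2 * N) - Real.log y) with hg
  have hN2 : (2 : ℝ) ≤ N := le_trans (by linarith) h2a
  have hNpos : (0 : ℝ) < N := by linarith
  set c : ℝ := 2 * N / Real.exp 1 with hc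
  have he1 : (0 : ℝ) < Real.exp 1 := Real.exp_pos 1
  have he4 : Real.exp 1 ≤ 4 := by
    have := Real.exp_one_lt_d9
    linarith
  have he2 : (2 : ℝ) ≤ Real.exp 1 := by
    have := Real.add_one_le_exp (1 : ℝ)
    linarith
  have hcpos : 0 < c := by positivity
  have hlogc : Real.log c = Real.log (2 * N) - 1 := by
    rw [hc, Real.log_div (by positivity) he1.ne', Real.log_exp]
  -- continuity / differentiability on positives
  have hdiff : ∀ x : ℝ, 0 < x → HasDerivAt g (Real.log (2 * N) - Real.log x - 1) x :=
    fun x hx => aux_glog_deriv N x hx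
  have hcont : ∀ (s : Set ℝ), s ⊆ Ioi 0 → ContinuousOn g s := by
    intro s hs
    exact fun x hx => ((hdiff x (hs hx)).continuousAt).continuousWithinAt
  have hmono : MonotoneOn g (Icc 1 c) := by
    apply monotoneOn_of_deriv_nonneg (convex_Icc 1 c)
    · exact hcont _ (fun x hx => lt_of_lt_of_le zero_lt_one hx.1)
    · intro x hx
      rw [interior_Icc] at hx
      exact ((hdiff x (lt_trans zero_lt_one hx.1)).differentiableAt).differentiableWithinAt
    · intro x hx
      rw [interior_Icc] at hx
      have hxpos : 0 < x := lt_trans zero_lt_one hx.1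
      have := (hdiff x hxpos).deriv
      rw [this]
      have : Real.log x ≤ Real.log c := Real.log_le_log hxpos hx.2.le
      rw [hlogc] at this
      linarith
  have hanti : AntitoneOn g (Icc c N) := by
    apply antitoneOn_of_deriv_nonpos (convex_Icc c N)
    · exact hcont _ (fun x hx => lt_of_lt_of_le hcpos hx.1)
    · intro x hx
      rw [interior_Icc] at hx
      exact ((hdiff x (lt_trans hcpos hx.1)).differentiableAt).differentiableWithinAt
    · intro x hx
      rw [interior_Icc] at hx
      have hxpos : 0 < x := lt_trans hcpos hx.1
      rw [(hdiff x hxpos).deriv]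
      have : Real.log c ≤ Real.log x := Real.log_le_log hcpos hx.1.le
      rw [hlogc] at this
      linarith
  have hc1 : (1 : ℝ) ≤ c := by
    rw [hc, le_div_iff₀ he1]
    linarith
  have hN2c : N / 2 ≤ c := by
    rw [hc, div_le_div_iff₀ (by norm_num) he1]
    nlinarith
  have hcN : c ≤ N := by
    rw [hc, div_le_iff₀ he1]
    nlinarith
  by_cases hkc : k ≤ c
  · exact hmono ⟨ha, le_trans hak hkc⟩ ⟨le_trans ha hak, hkc⟩ hak
  · push_neg at hkc
    have h1 : g a ≤ g (N / 2) :=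
      hmono ⟨ha, le_trans (by linarith) hN2c⟩ ⟨by linarith, hN2c⟩ (by linarith)
    have h2 : g N ≤ g k := hanti ⟨hkc.le, hkN⟩ ⟨hcN, le_refl N⟩ hkN
    have hgN2 : g (N / 2) = g N := by
      show (N / 2) * (Real.log (2 * N) - Real.log (N / 2)) = N * (Real.log (2 * N) - Real.log N)
      rw [Real.log_div hNpos.ne' (by norm_num), Real.log_mul (by norm_num) hNpos.ne']
      ring
    calc g a ≤ g (N / 2) := h1
      _ = g N := hgN2
      _ ≤ g k := h2

/-- The counting step in the proof of Lemma 1 bounding the total number of cut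
nodes: if `S_1, …, S_t` are pairwise disjoint nonempty finite sets whose total
size is at most `n`, with `1 ≤ t ≤ k ≤ n`, then
`∑_{i=1}^t ⌈log₂ |S_i|⌉ ≤ k·(log₂(n/k) + 1)`. -/
theorem sum_ceil_log_card_le (n k t : ℕ) (hk : 1 ≤ k) (hkn : k ≤ n)
    (ht : 1 ≤ t) (htk : t ≤ k) (S : Fin t → Finset ℕ)
    (hne : ∀ i, (S i).Nonempty)
    (hdisj : ∀ i j, i ≠ j → Disjoint (S i) (S j))
    (hsum : ∑ i, (S i).card ≤ n) :
    ((∑ i, ⌈Real.logb 2 ((S i).card : ℝ)⌉ : ℤ) : ℝ) ≤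
      (k : ℝ) * (Real.logb 2 ((n : ℝ) / k) + 1) := by
  classical
  have hlog2 : (0 : ℝ) < Real.log 2 := Real.log_pos one_lt_two
  have hn1 : 1 ≤ n := le_trans hk hkn
  have hn0 : ((n : ℝ)) ≠ 0 := by positivity
  have hk0 : ((k : ℝ)) ≠ 0 := by positivity
  have hcard1 : ∀ i, 1 ≤ (S i).card := fun i => Finset.card_pos.mpr (hne i)
  set A : Finset (Fin t) := Finset.univ.filter (fun i => 2 ≤ (S i).card) with hA
  -- terms outside A vanish
  have hzero : ∀ i ∈ Finset.univ \ A, ⌈Real.logb 2 ((S i).card : ℝ)⌉ = 0 := by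
    intro i hi
    rw [Finset.mem_sdiff] at hi
    have h2 : ¬ 2 ≤ (S i).card := by
      intro h
      exact hi.2 (by rw [hA, Finset.mem_filter]; exact ⟨Finset.mem_univ i, h⟩)
    have h1 : (S i).card = 1 := le_antisymm (by omega) (hcard1 i)
    rw [h1]
    norm_num
  have hsplit : (∑ i, ⌈Real.logb 2 ((S i).card : ℝ)⌉)
      = ∑ i ∈ A, ⌈Real.logb 2 ((S i).card : ℝ)⌉ := by
    rw [← Finset.sum_sdiff (Finset.subset_univ A), Finset.sum_eq_zero hzero, zero_add]
  -- rewrite RHS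
  have hRHS : Real.logb 2 ((n : ℝ) / k) + 1 = (Real.log (2 * n) - Real.log k) / Real.log 2 := by
    rw [Real.logb, Real.log_div hn0 hk0, Real.log_mul two_ne_zero hn0]
    field_simp
    ring
  rw [hsplit, hRHS]
  rw [← mul_div_assoc, le_div_iff₀ hlog2]
  -- now goal : (↑∑ ceil) * log 2 ≤ k * (log (2n) - log k)
  set a : ℕ := A.card with ha
  by_cases hA0 : A = ∅
  · rw [hA0]
    simp only [Finset.sum_empty, Int.cast_zero, zero_mul]
    have : Real.log k ≤ Real.log (2 * n) := by
      apply Real.log_le_log (by positivity)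
      have : (k : ℝ) ≤ n := by exact_mod_cast hkn
      linarith
    nlinarith [hk, (by exact_mod_cast hk : (1:ℝ) ≤ k)]
  · have haA : 1 ≤ a := Finset.card_pos.mpr (Finset.nonempty_of_ne_empty hA0)
    have ha0 : ((a : ℝ)) ≠ 0 := by positivity
    have hapos : (0 : ℝ) < a := by positivity
    have hfpos : ∀ i ∈ A, (0 : ℝ) < ((S i).card : ℝ) := by
      intro i _
      exact_mod_cast hcard1 i
    -- sum of cards over A, in ℕ
    have hSgn : (∑ i ∈ A, ((S i).card : ℝ)) ≤ n := by
      have h1 : ∑ i ∈ A, (S i).card ≤ ∑ i, (S i).card :=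
        Finset.sum_le_sum_of_subset (Finset.subset_univ A)
      have := le_trans h1 hsum
      exact_mod_cast this
    have h2a : 2 * (a : ℝ) ≤ ∑ i ∈ A, ((S i).card : ℝ) := by
      have h1 : A.card • 2 ≤ ∑ i ∈ A, (S i).card := by
        apply Finset.card_nsmul_le_sum
        intro i hi
        rw [hA, Finset.mem_filter] at hi
        exact hi.2
      rw [smul_eq_mul] at h1
      have : (A.card * 2 : ℝ) ≤ ∑ i ∈ A, ((S i).card : ℝ) := by exact_mod_cast h1
      linarith
    have hSgpos : (0 : ℝ) < ∑ i ∈ A, ((S i).card : ℝ) := by linarith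
    set Sg : ℝ := ∑ i ∈ A, ((S i).card : ℝ) with hSg
    -- AM-GM
    have amgm := Real.geom_mean_le_arith_mean_weighted A (fun _ => (a : ℝ)⁻¹)
      (fun i => ((S i).card : ℝ)) (fun i _ => by positivity)
      (by rw [Finset.sum_const, nsmul_eq_mul, ← ha, mul_inv_cancel₀ ha0])
      (fun i hi => (hfpos i hi).le)
    set P : ℝ := ∏ i ∈ A, ((S i).card : ℝ) ^ ((a : ℝ)⁻¹) with hP
    have hPpos : 0 < P :=
      Finset.prod_pos fun i hi => Real.rpow_pos_of_pos (hfpos i hi) _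
    have hlogP : Real.log P = (a : ℝ)⁻¹ * ∑ i ∈ A, Real.log ((S i).card : ℝ) := by
      rw [hP, Real.log_prod (fun i hi => (Real.rpow_pos_of_pos (hfpos i hi) _).ne'),
        Finset.mul_sum]
      exact Finset.sum_congr rfl fun i hi => by rw [Real.log_rpow (hfpos i hi), mul_comm]
    have hPle : P ≤ Sg / a := by
      have : (∑ i ∈ A, (a : ℝ)⁻¹ * ((S i).card : ℝ)) = Sg / a := by
        rw [← Finset.mul_sum, ← hSg, div_eq_inv_mul]
      rw [← this]
      exact amgm
    have hjensen : ∑ i ∈ A, Real.log ((S i).card : ℝ) ≤ (a : ℝ) * (Real.log Sg - Real.log a) := by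
      have h1 : Real.log P ≤ Real.log (Sg / a) := Real.log_le_log hPpos hPle
      rw [hlogP, Real.log_div hSgpos.ne' ha0] at h1
      calc ∑ i ∈ A, Real.log ((S i).card : ℝ)
          = (a : ℝ) * ((a : ℝ)⁻¹ * ∑ i ∈ A, Real.log ((S i).card : ℝ)) := by
            field_simp
        _ ≤ (a : ℝ) * (Real.log Sg - Real.log a) := by
            apply mul_le_mul_of_nonneg_left h1 hapos.le
    -- ceiling bound
    have hceil : ((∑ i ∈ A, ⌈Real.logb 2 ((S i).card : ℝ)⌉ : ℤ) : ℝ)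
        ≤ ∑ i ∈ A, (Real.logb 2 ((S i).card : ℝ) + 1) := by
      push_cast
      apply Finset.sum_le_sum
      intro i _
      exact (Int.ceil_lt_add_one _).le
    -- combine
    have hmain : (∑ i ∈ A, (Real.logb 2 ((S i).card : ℝ) + 1)) * Real.log 2
        ≤ (k : ℝ) * (Real.log (2 * n) - Real.log k) := by
      have hexp : (∑ i ∈ A, (Real.logb 2 ((S i).card : ℝ) + 1)) * Real.log 2
          = (∑ i ∈ A, Real.log ((S i).card : ℝ)) + (a : ℝ) * Real.log 2 := by
        rw [Finset.sum_add_distrib, Finset.sum_const, add_mul, nsmul_eq_mul, mul_one, ← ha]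
        congr 1
        rw [Finset.sum_mul]
        exact Finset.sum_congr rfl fun i hi => by
          rw [Real.logb, div_mul_cancel₀ _ hlog2.ne']
      rw [hexp]
      have step1 : (∑ i ∈ A, Real.log ((S i).card : ℝ)) + (a : ℝ) * Real.log 2
          ≤ (a : ℝ) * (Real.log (2 * n) - Real.log a) := by
        have hlogSg : Real.log 2 + Real.log Sg ≤ Real.log (2 * n) := by
          rw [← Real.log_mul two_ne_zero hSgpos.ne']
          apply Real.log_le_log (by positivity)
          nlinarith
        nlinarith [hjensen]
      have step2 : (a : ℝ) * (Real.log (2 * n) - Real.log a)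
          ≤ (k : ℝ) * (Real.log (2 * n) - Real.log k) := by
        apply aux_glog_mono
        · exact_mod_cast haA
        · have : a ≤ k := le_trans (le_trans (Finset.card_le_univ A) (by simp)) htk
          exact_mod_cast this
        · exact_mod_cast hkn
        · have : Sg ≤ n := hSgn
          linarith
      linarith
    calc ((∑ i ∈ A, ⌈Real.logb 2 ((S i).card : ℝ)⌉ : ℤ) : ℝ) * Real.log 2
        ≤ (∑ i ∈ A, (Real.logb 2 ((S i).card : ℝ) + 1)) * Real.log 2 := by
          apply mul_le_mul_of_nonneg_right hceil hlog2.le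
      _ ≤ (k : ℝ) * (Real.log (2 * n) - Real.log k) := hmain
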